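/- arXiv:1108.0617 — 2 statements merged into one kernel-verified Lean document; each statement's English description precedes it below -/
import Mathlib

section
/- If W is in Sep(X)* (the dual cone of fully separable operators on X₁⊗⋯⊗X_m) and C is in Sep(Y₁,…,Y_m), then W⊗C belongs to Sep(X₁⊗Y₁,…,X_m⊗Y_m)*, the dual cone of fully separable operators with respect to the partition (X₁⊗Y₁,…,X_m⊗Y_m). -/
open scoped Kronecker ComplexOrder
open Matrix

/-- The square root of a positive semidefinite matrix (removed from Mathlib; old definition). -/
noncomputable def Matrix.PosSemidef.sqrt {n 𝕜 : Type*} [Fintype n] [RCLike 𝕜] [DecidableEq n]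
    {A : Matrix n n 𝕜} (hA : A.PosSemidef) : Matrix n n 𝕜 :=
  hA.isHermitian.eigenvectorUnitary.1 * Matrix.diagonal ((↑) ∘ (√·) ∘ hA.isHermitian.eigenvalues) *
    (star hA.isHermitian.eigenvectorUnitary : Matrix n n 𝕜)

/-- Trace norm of a complex matrix: `Tr √(Aᴴ A)`. -/
noncomputable def traceNorm {n : Type*} [Fintype n] [DecidableEq n] (A : Matrix n n ℂ) : ℝ :=
  ((Matrix.posSemidef_conjTranspose_mul_self A).sqrt).trace.re

/-- Spectral (operator) norm of a complex matrix. -/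
noncomputable def opNorm {n : Type*} [Fintype n] [DecidableEq n] (A : Matrix n n ℂ) : ℝ :=
  ‖Matrix.toEuclideanCLM (𝕜 := ℂ) A‖

/-- Tensor product of a family of `m` matrices, as a matrix on the product index. -/
noncomputable def famTensor {m : ℕ} {ι : Fin m → Type*} [∀ j, Fintype (ι j)]
    (M : ∀ j, Matrix (ι j) (ι j) ℂ) : Matrix (∀ j, ι j) (∀ j, ι j) ℂ :=
  fun x y => ∏ j, M j (x j) (y j)

/-- Full separability across the partition `ι 1, …, ι m`. -/
def IsFullySep {m : ℕ} {ι : Fin m → Type*} [∀ j, Fintype (ι j)]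
    (A : Matrix (∀ j, ι j) (∀ j, ι j) ℂ) : Prop :=
  ∃ (k : ℕ) (P : Fin k → ∀ j, Matrix (ι j) (ι j) ℂ),
    (∀ i j, (P i j).PosSemidef) ∧ A = ∑ i, famTensor (P i)

/-- Membership in the dual cone of the fully separable operators. -/
def InSepDual {m : ℕ} {ι : Fin m → Type*} [∀ j, Fintype (ι j)]
    (W : Matrix (∀ j, ι j) (∀ j, ι j) ℂ) : Prop :=
  ∀ S : Matrix (∀ j, ι j) (∀ j, ι j) ℂ, IsFullySep S → 0 ≤ ((S * W).trace).re

/-- Partial trace over the second tensor factor. -/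
noncomputable def ptraceY {ι κ : Type*} [Fintype κ] (M : Matrix (ι × κ) (ι × κ) ℂ) :
    Matrix ι ι ℂ :=
  fun i i' => ∑ k, M (i, k) (i', k)

/-- The natural identification `⨂ⱼ (Xⱼ ⊗ Yⱼ) ≃ (⨂ⱼ Xⱼ) ⊗ (⨂ⱼ Yⱼ)` on index sets. -/
def piProd {m : ℕ} (ι κ : Fin m → Type*) : (∀ j, ι j × κ j) ≃ (∀ j, ι j) × (∀ j, κ j) where
  toFun f := (fun j => (f j).1, fun j => (f j).2)
  invFun p := fun j => (p.1 j, p.2 j)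
  left_inv _ := rfl
  right_inv _ := rfl

/-! ### Auxiliary definitions and lemmas -/

/-- Contraction `Tr_Y[A (1 ⊗ Bᵀ-ish)]`: the matrix `a b ↦ ∑ c d, A (a,c) (b,d) * B d c`. -/
noncomputable def ptr {α β : Type*} [Fintype β]
    (A : Matrix (α × β) (α × β) ℂ) (B : Matrix β β ℂ) : Matrix α α ℂ :=
  fun a b => ∑ c, ∑ d, A (a, c) (b, d) * B d c

lemma ptr_posSemidef {α β : Type*} [Fintype α] [Fintype β]
    {A : Matrix (α × β) (α × β) ℂ} {B : Matrix β β ℂ}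
    (hA : A.PosSemidef) (hB : B.PosSemidef) : (ptr A B).PosSemidef := by
  classical
  refine Matrix.PosSemidef.of_dotProduct_mulVec_nonneg ?_ ?_
  · ext a b
    simp only [Matrix.conjTranspose_apply, ptr, star_sum, star_mul', hA.1.apply, hB.1.apply]
    exact Finset.sum_comm
  · open scoped MatrixOrder Matrix.Norms.L2Operator in
    obtain ⟨D, hD⟩ := CStarAlgebra.nonneg_iff_eq_star_mul_self.mp hB.nonneg
    rw [Matrix.star_eq_conjTranspose] at hD
    subst hD
    intro x
    have key : dotProduct (star x) ((ptr A (Dᴴ * D)).mulVec x)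
        = ∑ k, dotProduct (star (fun p : α × β => x p.1 * star (D k p.2)))
            (A.mulVec (fun p : α × β => x p.1 * star (D k p.2))) := by
      simp only [dotProduct, Matrix.mulVec, ptr, Matrix.mul_apply,
        Matrix.conjTranspose_apply, Pi.star_apply, Fintype.sum_prod_type,
        Finset.mul_sum, Finset.sum_mul, star_mul', star_star]
      have l1 : (∑ p : α × α × β × β × β,
          star (x p.1) * (A (p.1, p.2.2.1) (p.2.1, p.2.2.2.1) *
            (star (D p.2.2.2.2 p.2.2.2.1) * D p.2.2.2.2 p.2.2.1) * x p.2.1))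
          = ∑ a : α, ∑ b : α, ∑ c : β, ∑ d : β, ∑ k : β,
              star (x a) * (A (a, c) (b, d) * (star (D k d) * D k c) * x b) := by
        simp only [Fintype.sum_prod_type]
      have l2 : (∑ q : β × α × β × α × β,
          star (x q.2.1) * D q.1 q.2.2.1 * (A (q.2.1, q.2.2.1) (q.2.2.2.1, q.2.2.2.2) *
            (x q.2.2.2.1 * star (D q.1 q.2.2.2.2))))
          = ∑ k : β, ∑ a : α, ∑ c : β, ∑ b : α, ∑ d : β,
              star (x a) * D k c * (A (a, c) (b, d) * (x b * star (D k d))) := by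
        simp only [Fintype.sum_prod_type]
      rw [← l1, ← l2]
      refine Fintype.sum_equiv
        ⟨fun p => (p.2.2.2.2, (p.1, (p.2.2.1, (p.2.1, p.2.2.2.1)))),
         fun q => (q.2.1, (q.2.2.2.1, (q.2.2.1, (q.2.2.2.2, q.1)))),
         fun p => rfl, fun q => rfl⟩ _ _ fun p => ?_
      simp only [Equiv.coe_fn_mk]
      ring
    rw [key]
    exact Finset.sum_nonneg fun k _ => hA.dotProduct_mulVec_nonneg _

lemma isFullySep_of_family {m : ℕ} {ι : Fin m → Type*} [∀ j, Fintype (ι j)]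
    {τ : Type} [Fintype τ] (P : τ → ∀ j, Matrix (ι j) (ι j) ℂ)
    (hP : ∀ i j, (P i j).PosSemidef) : IsFullySep (∑ i, famTensor (P i)) := by
  refine ⟨Fintype.card τ, fun i => P ((Fintype.equivFin τ).symm i), fun i j => hP _ _, ?_⟩
  exact (Equiv.sum_comp (Fintype.equivFin τ).symm fun x => famTensor (P x)).symm

lemma trace_core {m : ℕ} {ι κ : Fin m → Type} [∀ j, Fintype (ι j)] [∀ j, Fintype (κ j)]
    (W : Matrix (∀ j, ι j) (∀ j, ι j) ℂ)
    (P : ∀ j, Matrix (ι j × κ j) (ι j × κ j) ℂ)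
    (Q : ∀ j, Matrix (κ j) (κ j) ℂ) :
    (famTensor P *
      (Matrix.reindex (piProd ι κ).symm (piProd ι κ).symm (W ⊗ₖ famTensor Q))).trace
    = (famTensor (fun j => ptr (P j) (Q j)) * W).trace := by
  classical
  -- canonical middle form
  have hmid : ∀ x x' : ∀ j, ι j,
      (∏ j, ∑ p : κ j × κ j, P j (x j, p.1) (x' j, p.2) * Q j p.2 p.1)
      = ∑ g : ∀ j, κ j × κ j,
          ∏ j, P j (x j, (g j).1) (x' j, (g j).2) * Q j ((g j).2) ((g j).1) :=
    fun x x' => Fintype.prod_sum _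
  -- expand both traces
  simp only [Matrix.trace, Matrix.diag, Matrix.mul_apply, Matrix.reindex_apply,
    Matrix.submatrix_apply, Equiv.symm_symm, Matrix.kroneckerMap_apply, famTensor, ptr,
    piProd, Equiv.coe_fn_mk]
  have hrhs : ∀ x x' : ∀ j, ι j,
      (∏ j, ∑ c, ∑ d, P j (x j, c) (x' j, d) * Q j d c)
      = ∑ g : ∀ j, κ j × κ j,
          ∏ j, P j (x j, (g j).1) (x' j, (g j).2) * Q j ((g j).2) ((g j).1) := by
    intro x x'
    rw [← hmid x x']
    exact Finset.prod_congr rfl fun j _ =>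
      (Fintype.sum_prod_type (f := fun p : κ j × κ j => P j (x j, p.1) (x' j, p.2) * Q j p.2 p.1)).symm
  simp only [hrhs, Finset.sum_mul]
  have L : (∑ uv : ((∀ j, ι j × κ j) × (∀ j, ι j × κ j)),
      (∏ j, P j (uv.1 j) (uv.2 j)) *
        ((W (fun j => (uv.2 j).1) fun j => (uv.1 j).1) * ∏ j, Q j (uv.2 j).2 (uv.1 j).2))
      = ∑ u : ∀ j, ι j × κ j, ∑ v : ∀ j, ι j × κ j,
          (∏ j, P j (u j) (v j)) *
            ((W (fun j => (v j).1) fun j => (u j).1) * ∏ j, Q j (v j).2 (u j).2) := by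
    simp only [Fintype.sum_prod_type]
  have R : (∑ w : (∀ j, ι j) × (∀ j, ι j) × (∀ j, κ j × κ j),
      (∏ j, P j (w.1 j, (w.2.2 j).1) (w.2.1 j, (w.2.2 j).2) *
        Q j ((w.2.2 j).2) ((w.2.2 j).1)) * W w.2.1 w.1)
      = ∑ x : ∀ j, ι j, ∑ x' : ∀ j, ι j, ∑ g : ∀ j, κ j × κ j,
          (∏ j, P j (x j, (g j).1) (x' j, (g j).2) * Q j ((g j).2) ((g j).1)) * W x' x := by
    simp only [Fintype.sum_prod_type]
  rw [← L, ← R]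
  refine Fintype.sum_equiv
    ⟨fun uv => (fun j => (uv.1 j).1, fun j => (uv.2 j).1, fun j => ((uv.1 j).2, (uv.2 j).2)),
     fun w => (fun j => (w.1 j, (w.2.2 j).1), fun j => (w.2.1 j, (w.2.2 j).2)),
     fun uv => rfl, fun w => rfl⟩ _ _ fun uv => ?_
  simp only [Equiv.coe_fn_mk, Prod.mk.eta, Finset.prod_mul_distrib]
  ring

/-- If `W ∈ Sep(X₁,…,X_m)*` and `C ∈ Sep(Y₁,…,Y_m)`, then `W ⊗ C` belongs to
`Sep(X₁⊗Y₁,…,X_m⊗Y_m)*`. -/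
theorem sepDual_kron_sep_mem_sepDual {m : ℕ} {ι κ : Fin m → Type}
    [∀ j, Fintype (ι j)] [∀ j, Fintype (κ j)]
    (W : Matrix (∀ j, ι j) (∀ j, ι j) ℂ) (C : Matrix (∀ j, κ j) (∀ j, κ j) ℂ)
    (hW : InSepDual W) (hC : IsFullySep C) :
    InSepDual (ι := fun j => ι j × κ j)
      (Matrix.reindex (piProd ι κ).symm (piProd ι κ).symm (W ⊗ₖ C)) := by
  classical
  obtain ⟨l, Q, hQ, rfl⟩ := hC
  intro S hS
  obtain ⟨k, P, hP, rfl⟩ := hS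
  have hk : Matrix.reindex (piProd ι κ).symm (piProd ι κ).symm (W ⊗ₖ ∑ t, famTensor (Q t))
      = ∑ t, Matrix.reindex (piProd ι κ).symm (piProd ι κ).symm (W ⊗ₖ famTensor (Q t)) := by
    ext u v
    simp [Matrix.kroneckerMap_apply, Matrix.sum_apply, Finset.mul_sum]
  have key : ((∑ i, famTensor (P i)) *
        Matrix.reindex (piProd ι κ).symm (piProd ι κ).symm (W ⊗ₖ ∑ t, famTensor (Q t))).trace
      = ((∑ q : Fin k × Fin l, famTensor (fun j => ptr (P q.1 j) (Q q.2 j))) * W).trace := by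
    rw [hk, Finset.sum_mul]
    simp only [Finset.mul_sum, Matrix.trace_sum]
    rw [Fintype.sum_prod_type, Finset.sum_mul, Matrix.trace_sum]
    refine Finset.sum_congr rfl fun i _ => ?_
    rw [Finset.sum_mul, Matrix.trace_sum]
    exact Finset.sum_congr rfl fun t _ => trace_core W (P i) (Q t)
  rw [key]
  exact hW _ (isFullySep_of_family _ fun q j => ptr_posSemidef (hP q.1 j) (hQ q.2 j))
end

section
/- The two-qubit operator C = ½|00⟩⟨00| + ½|Ψ⁺⟩⟨Ψ⁺|, where |Ψ⁺⟩ = (|01⟩+|10⟩)/√2, is not a separable operator: it cannot be written as a finite sum Σᵢ ρᵢ⊗σᵢ with all ρᵢ, σᵢ positive semidefinite on ℂ². -/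
open scoped Kronecker ComplexOrder

/-- The basis state `|00⟩` of two qubits. -/
noncomputable def ket00 : Fin 2 × Fin 2 → ℂ := fun p => if p = (0, 0) then 1 else 0

/-- The Bell state `|Ψ⁺⟩ = (|01⟩ + |10⟩)/√2`. -/
noncomputable def ketPsiPlus : Fin 2 × Fin 2 → ℂ := fun p =>
  if p = (0, 1) ∨ p = (1, 0) then (1 / Real.sqrt 2 : ℝ) else 0

/-- The two-qubit operator `C = ½|00⟩⟨00| + ½|Ψ⁺⟩⟨Ψ⁺|`. -/
noncomputable def Cop : Matrix (Fin 2 × Fin 2) (Fin 2 × Fin 2) ℂ :=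
  (1 / 2 : ℂ) • Matrix.vecMulVec ket00 (star ket00) +
    (1 / 2 : ℂ) • Matrix.vecMulVec ketPsiPlus (star ketPsiPlus)

open scoped MatrixOrder in
lemma psd_diag_real {n : Type*} [Fintype n] [DecidableEq n] {M : Matrix n n ℂ}
    (hM : M.PosSemidef) (j : n) : ∃ r : ℝ, 0 ≤ r ∧ M j j = (r : ℂ) := by
  obtain ⟨B, rfl⟩ := CStarAlgebra.nonneg_iff_eq_star_mul_self.mp hM.nonneg
  rw [Matrix.star_eq_conjTranspose] at *
  refine ⟨∑ k, Complex.normSq (B k j), Finset.sum_nonneg fun k _ => Complex.normSq_nonneg _, ?_⟩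
  simp [Matrix.mul_apply, Matrix.conjTranspose_apply, Complex.normSq_eq_conj_mul_self]

open scoped MatrixOrder in
lemma psd_col_zero {n : Type*} [Fintype n] [DecidableEq n] {M : Matrix n n ℂ}
    (hM : M.PosSemidef) {j : n} (h : M j j = 0) (i : n) : M i j = 0 := by
  obtain ⟨B, rfl⟩ := CStarAlgebra.nonneg_iff_eq_star_mul_self.mp hM.nonneg
  rw [Matrix.star_eq_conjTranspose] at *
  have h' : ∑ k, (Complex.normSq (B k j) : ℂ) = 0 := by
    simpa [Matrix.mul_apply, Matrix.conjTranspose_apply,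
      Complex.normSq_eq_conj_mul_self] using h
  have h'' : ∑ k, Complex.normSq (B k j) = 0 := by
    exact_mod_cast h'
  have hcol : ∀ k ∈ Finset.univ, Complex.normSq (B k j) = 0 :=
    (Finset.sum_eq_zero_iff_of_nonneg fun k _ => Complex.normSq_nonneg _).mp h''
  have hz : ∀ k : n, B k j = 0 := fun k =>
    Complex.normSq_eq_zero.mp (hcol k (Finset.mem_univ k))
  simp [Matrix.mul_apply, Matrix.conjTranspose_apply, hz]

/-- `C = ½|00⟩⟨00| + ½|Ψ⁺⟩⟨Ψ⁺|` is not a separable operator. -/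
theorem Cop_not_separable :
    ¬ ∃ (k : ℕ) (ρ σ : Fin k → Matrix (Fin 2) (Fin 2) ℂ),
        (∀ i, (ρ i).PosSemidef) ∧ (∀ i, (σ i).PosSemidef) ∧
        Cop = ∑ i, ρ i ⊗ₖ σ i := by
  rintro ⟨k, ρ, σ, hρ, hσ, hC⟩
  -- entry at ((1,1),(1,1)) is 0
  have h11 : ∑ i, ρ i 1 1 * σ i 1 1 = 0 := by
    have := congrFun (congrFun hC ((1, 1) : Fin 2 × Fin 2)) ((1, 1) : Fin 2 × Fin 2)
    simpa [Cop, ket00, ketPsiPlus, Matrix.vecMulVec_apply, Matrix.sum_apply,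
      Matrix.kroneckerMap_apply] using this.symm
  choose r hr hρr using fun i => psd_diag_real (hρ i) 1
  choose s hs hσs using fun i => psd_diag_real (hσ i) 1
  have hreal : ∑ i, r i * s i = 0 := by
    have : ((∑ i, r i * s i : ℝ) : ℂ) = 0 := by
      push_cast
      rw [← h11]
      exact Finset.sum_congr rfl fun i _ => by rw [hρr, hσs]
    exact_mod_cast this
  have hterm : ∀ i, ρ i 1 1 = 0 ∨ σ i 1 1 = 0 := by
    intro i
    have := (Finset.sum_eq_zero_iff_of_nonneg fun i _ =>
      mul_nonneg (hr i) (hs i)).mp hreal i (Finset.mem_univ i)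
    rcases mul_eq_zero.mp this with h | h
    · left; rw [hρr, h]; norm_num
    · right; rw [hσs, h]; norm_num
  have hzero : ∀ i, ρ i 0 1 * σ i 1 0 = 0 := by
    intro i
    rcases hterm i with h | h
    · rw [psd_col_zero (hρ i) h 0, zero_mul]
    · have h01 : σ i 0 1 = 0 := psd_col_zero (hσ i) h 0
      have h10 : σ i 1 0 = 0 := by
        rw [← (hσ i).isHermitian.apply 1 0, h01, star_zero]
      rw [h10, mul_zero]
  have hcontra : Cop (0, 1) (1, 0) = 0 := by
    rw [hC]
    simp [Matrix.sum_apply, Matrix.kroneckerMap_apply, hzero]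
  have : Cop ((0 : Fin 2), (1 : Fin 2)) ((1 : Fin 2), (0 : Fin 2)) = 1 / 4 := by
    simp [Cop, ket00, ketPsiPlus, Matrix.vecMulVec_apply]
    norm_num
    rw [show ((Real.sqrt 2 : ℂ))⁻¹ * ((Real.sqrt 2 : ℂ))⁻¹ = (((Real.sqrt 2 : ℂ)) ^ 2)⁻¹ by ring,
      ← Complex.ofReal_pow, Real.sq_sqrt (by norm_num : (0:ℝ) ≤ 2)]
    norm_num
  rw [hcontra] at this
  norm_num at this
end
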